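/- arXiv:2303.07934 — 5 statements merged into one kernel-verified Lean document; each statement's English description precedes it below -/
import Mathlib

section
/- For a prime p and integer q ≥ 1, the sum S_q(p) = Σ_{k=1}^{p-1} ⌊k^(2q+1)/p⌋ satisfies 2·S_q(p) = Σ_{k=1}^{p-1} Σ_{r=0}^{2q} (-1)^r · C(2q+1, r) · k^r · p^(2q-r) - (p-1). -/
theorem stmt_3 (p q : ℕ) (hp : p.Prime) (hq : 1 ≤ q) :
    2 * ∑ k ∈ Finset.Icc 1 (p - 1), ⌊((k : ℚ) ^ (2 * q + 1)) / p⌋ =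
      ∑ k ∈ Finset.Icc 1 (p - 1), ∑ r ∈ Finset.range (2 * q + 1),
        (-1 : ℤ) ^ r * ((2 * q + 1).choose r) * (k : ℤ) ^ r * (p : ℤ) ^ (2 * q - r)
      - ((p : ℤ) - 1) := by
  have hp2 : 2 ≤ p := hp.two_le
  set n := 2 * q + 1 with hn
  have hpz : (p : ℤ) ≠ 0 := by positivity
  have hppos : (0:ℤ) < p := by exact_mod_cast hp.pos
  have hpint : Prime (p:ℤ) := Nat.prime_iff_prime_int.mp hp
  have hndvd : ∀ k : ℕ, 1 ≤ k → k ≤ p - 1 → ¬ ((p:ℤ) ∣ (k:ℤ)^n) := by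
    intro k hk1 hk2 hdvd
    have hkp : k < p := by omega
    have : (p:ℤ) ∣ (k:ℤ) := hpint.dvd_of_dvd_pow hdvd
    have : p ∣ k := by exact_mod_cast this
    have := Nat.le_of_dvd (by omega) this
    omega
  have key : ∀ k ∈ Finset.Icc 1 (p - 1),
      (k:ℤ)^n / (p:ℤ) + (((p - k : ℕ)):ℤ)^n / (p:ℤ) =
      (∑ r ∈ Finset.range n, (-1:ℤ)^r * (n.choose r) * (k:ℤ)^r * (p:ℤ)^(2*q-r)) - 1 := by
    intro k hk
    rw [Finset.mem_Icc] at hk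
    obtain ⟨hk1, hk2⟩ := hk
    have hkp : k < p := by omega
    have hcast : ((p - k : ℕ):ℤ) = (p:ℤ) - k := Nat.cast_sub hkp.le
    have hodd : Odd n := ⟨q, by omega⟩
    set M : ℤ := ∑ r ∈ Finset.range n, (-1:ℤ)^r * (n.choose r) * (k:ℤ)^r * (p:ℤ)^(2*q-r) with hM
    have hexp : (k:ℤ)^n + ((p:ℤ) - k)^n = p * M := by
      have h1 : ((p:ℤ) - k)^n = ((-k) + p)^n := by ring_nf
      rw [h1, add_pow, Finset.sum_range_succ]
      have h2 : (-(k:ℤ))^n * (p:ℤ)^(n-n) * (n.choose n) = -((k:ℤ)^n) := by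
        simp [hodd.neg_pow]
      rw [h2, hM, Finset.mul_sum]
      rw [show (k:ℤ)^n + (∑ m ∈ Finset.range n, (-(k:ℤ))^m * (p:ℤ)^(n-m) * (n.choose m) + -((k:ℤ)^n))
          = ∑ m ∈ Finset.range n, (-(k:ℤ))^m * (p:ℤ)^(n-m) * (n.choose m) by ring]
      refine Finset.sum_congr rfl fun m hm => ?_
      rw [Finset.mem_range] at hm
      have hnm : n - m = (2*q - m) + 1 := by omega
      rw [hnm, neg_pow, pow_succ]
      ring
    set a : ℤ := (k:ℤ)^n % p with ha
    set b : ℤ := ((p:ℤ) - k)^n % p with hb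
    have hane : a ≠ 0 := fun h => hndvd k hk1 hk2 (Int.dvd_of_emod_eq_zero h)
    have hbne : b ≠ 0 := by
      intro h
      have hd : (p:ℤ) ∣ ((p:ℤ) - k)^n := Int.dvd_of_emod_eq_zero h
      rw [← hcast] at hd
      exact hndvd (p - k) (by omega) (by omega) hd
    have halt : a < p := Int.emod_lt_of_pos _ hppos
    have hblt : b < p := Int.emod_lt_of_pos _ hppos
    have hage : 0 < a := lt_of_le_of_ne (Int.emod_nonneg _ hpz) (Ne.symm hane)
    have hbge : 0 < b := lt_of_le_of_ne (Int.emod_nonneg _ hpz) (Ne.symm hbne)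
    have hdvdab : (p:ℤ) ∣ a + b := by
      have h3 : (a + b) % p = ((k:ℤ)^n + ((p:ℤ)-k)^n) % p := by
        rw [ha, hb, Int.add_emod, Int.emod_emod_of_dvd _ dvd_rfl, Int.emod_emod_of_dvd _ dvd_rfl,
          ← Int.add_emod]
      rw [hexp, Int.mul_emod_right] at h3
      exact Int.dvd_of_emod_eq_zero h3
    have hab : a + b = p := by
      obtain ⟨t, ht⟩ := hdvdab
      have ht1 : 0 < t := by
        by_contra h
        push_neg at h
        nlinarith
      have ht2 : t < 2 := by
        by_contra h
        push_neg at h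
        nlinarith
      have : t = 1 := by omega
      rw [this, mul_one] at ht
      linarith
    have e1 := Int.mul_ediv_add_emod ((k:ℤ)^n) p
    have e2 := Int.mul_ediv_add_emod (((p:ℤ) - k)^n) p
    rw [hcast]
    rw [← ha] at e1
    rw [← hb] at e2
    have hfin : (p:ℤ) * ((k:ℤ)^n / p + ((p:ℤ) - k)^n / p) = p * (M - 1) := by
      rw [mul_add, mul_sub, mul_one, ← hexp]
      linarith
    exact mul_left_cancel₀ hpz hfin
  have hfloor : ∀ k : ℕ, ⌊((k : ℚ) ^ n) / p⌋ = (k:ℤ)^n / (p:ℤ) := by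
    intro k
    rw [show ((k:ℚ)^n) = (((k:ℤ)^n : ℤ):ℚ) by push_cast; ring]
    exact Rat.floor_intCast_div_natCast ((k:ℤ)^n) p
  simp only [hfloor]
  rw [two_mul]
  have hre : ∑ k ∈ Finset.Icc 1 (p-1), (k:ℤ)^n / (p:ℤ)
      = ∑ k ∈ Finset.Icc 1 (p-1), (((p - k : ℕ)):ℤ)^n / (p:ℤ) := by
    refine Finset.sum_nbij' (fun k => p - k) (fun k => p - k) ?_ ?_ ?_ ?_ ?_ <;>
      intro a ha <;> simp only [Finset.mem_Icc] at *
    · omega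
    · omega
    · omega
    · omega
    · have h : p - (p - a) = a := by omega
      rw [h]
  rw [show (∑ k ∈ Finset.Icc 1 (p-1), (k:ℤ)^n / (p:ℤ)) + ∑ k ∈ Finset.Icc 1 (p-1), (k:ℤ)^n / (p:ℤ)
      = ∑ k ∈ Finset.Icc 1 (p-1), ((k:ℤ)^n / (p:ℤ) + (((p - k : ℕ)):ℤ)^n / (p:ℤ)) by
        rw [Finset.sum_add_distrib, ← hre]]
  rw [Finset.sum_congr rfl key, Finset.sum_sub_distrib]
  congr 1
  rw [Finset.sum_const, Nat.card_Icc]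
  have h : p - 1 + 1 - 1 = p - 1 := by omega
  rw [h]
  simp only [nsmul_eq_mul, mul_one]
  omega
end

section
/- For a prime p and integer q ≥ 1, Σ_{k=1}^{p-1} ⌊k^(2q+1)/p⌋ = (p-1)(p^(2q)-1)/2 + (1/2) Σ_{r=1}^{2q} ((-1)^r/(r+1)) · C(2q+1, r) · Σ_{l=0}^{r} C(r+1, l) · B_l · p^(2q+1-l), where B_l are the Bernoulli numbers. -/
open Finset

private lemma mod_pair' {p : ℕ} (hp : p.Prime) {n : ℕ} (hn : Odd n) {k : ℕ}
    (hk1 : 1 ≤ k) (hk2 : k < p) : k ^ n % p + (p - k) ^ n % p = p := by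
  have hdvd : p ∣ k ^ n + (p - k) ^ n := by
    rw [← ZMod.natCast_eq_zero_iff]
    push_cast
    rw [Nat.cast_sub hk2.le, ZMod.natCast_self, zero_sub, hn.neg_pow]
    ring
  have h1 : k ^ n % p < p := Nat.mod_lt _ hp.pos
  have h2 : (p - k) ^ n % p < p := Nat.mod_lt _ hp.pos
  have hne : k ^ n % p ≠ 0 := by
    rw [Ne, ← Nat.dvd_iff_mod_eq_zero]
    intro h
    exact absurd (hp.dvd_of_dvd_pow h) (Nat.not_dvd_of_pos_of_lt hk1 hk2)
  have hdvd2 : p ∣ k ^ n % p + (p - k) ^ n % p := by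
    have h3 := Nat.add_mod (k ^ n) ((p - k) ^ n) p
    rw [Nat.dvd_iff_mod_eq_zero.1 hdvd] at h3
    exact Nat.dvd_iff_mod_eq_zero.2 h3.symm
  obtain ⟨c, hc⟩ := hdvd2
  have hc2 : c < 2 := by
    by_contra h
    push_neg at h
    have : p * 2 ≤ p * c := Nat.mul_le_mul_left _ h
    omega
  interval_cases c <;> omega

private lemma mod_sum' {p : ℕ} (hp : p.Prime) {n : ℕ} (hn : Odd n) :
    2 * ∑ k ∈ Icc 1 (p - 1), (k ^ n % p) = p * (p - 1) := by
  have hrefl : ∑ k ∈ Icc 1 (p - 1), ((p - k) ^ n % p) = ∑ k ∈ Icc 1 (p - 1), (k ^ n % p) := by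
    have hp2 := hp.two_le
    refine Finset.sum_nbij' (fun k => p - k) (fun k => p - k) ?_ ?_ ?_ ?_ ?_ <;>
        (intro a ha; simp only [Finset.mem_Icc] at *)
    · omega
    · omega
    · omega
    · omega
  calc 2 * ∑ k ∈ Icc 1 (p - 1), (k ^ n % p)
      = ∑ k ∈ Icc 1 (p - 1), (k ^ n % p + (p - k) ^ n % p) := by
        rw [Finset.sum_add_distrib, hrefl]; ring
    _ = ∑ k ∈ Icc 1 (p - 1), p := by
        apply Finset.sum_congr rfl
        intro k hk
        simp only [Finset.mem_Icc] at hk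
        exact mod_pair' hp hn hk.1 (by have := hp.two_le; omega)
    _ = p * (p - 1) := by simp [Nat.card_Icc]; ring

private lemma sum_shift' (m : ℕ) (f : ℕ → ℚ) :
    ∑ k ∈ Icc 1 m, f k = ∑ i ∈ range m, f (i + 1) := by
  rw [← Finset.Ico_add_one_right_eq_Icc, Finset.sum_Ico_eq_sum_range]
  refine Finset.sum_congr (by congr 1 <;> omega) fun i _ => by rw [add_comm]

theorem stmt_4 (p q : ℕ) (hp : p.Prime) (hq : 1 ≤ q) :
    (∑ k ∈ Finset.Icc 1 (p - 1), (⌊((k : ℚ) ^ (2 * q + 1)) / p⌋ : ℚ)) =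
      ((p : ℚ) - 1) * ((p : ℚ) ^ (2 * q) - 1) / 2 +
      (1 / 2) * ∑ r ∈ Finset.Icc 1 (2 * q), ((-1 : ℚ) ^ r / (r + 1)) *
        ((2 * q + 1).choose r) *
        ∑ l ∈ Finset.range (r + 1),
          ((r + 1).choose l : ℚ) * bernoulli l * (p : ℚ) ^ (2 * q + 1 - l) := by
  have hp2 := hp.two_le
  have hp0 : (p : ℚ) ≠ 0 := Nat.cast_ne_zero.2 hp.pos.ne'
  set n := 2 * q + 1 with hn_def
  have hodd : Odd n := ⟨q, by omega⟩
  set S : ℕ → ℚ := fun r => ∑ k ∈ range p, (k : ℚ) ^ r with hS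
  have hSr : ∀ r, S r = ∑ k ∈ range p, (k : ℚ) ^ r := fun _ => rfl
  -- Step A : LHS
  have hmodsum : (∑ k ∈ Icc 1 (p - 1), ((k ^ n % p : ℕ) : ℚ)) = (p : ℚ) * ((p : ℚ) - 1) / 2 := by
    have key := mod_sum' hp hodd
    have h2 : ((2 * ∑ k ∈ Icc 1 (p - 1), (k ^ n % p) : ℕ) : ℚ) = ((p * (p - 1) : ℕ) : ℚ) := by
      rw [key]
    push_cast [Nat.cast_sub (by omega : 1 ≤ p)] at h2
    linarith
  have hfloor : ∀ k : ℕ, (⌊((k : ℚ) ^ n) / p⌋ : ℚ) = ((k : ℚ) ^ n - ((k ^ n % p : ℕ) : ℚ)) / p := by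
    intro k
    have h1 : ((k : ℚ) ^ n) = (((k ^ n : ℕ) : ℤ) : ℚ) := by push_cast; ring
    rw [h1, Rat.floor_intCast_div_natCast, ← Int.natCast_div, Int.cast_natCast]
    have h2 : (p : ℚ) * ((k ^ n / p : ℕ) : ℚ) + ((k ^ n % p : ℕ) : ℚ) = ((k ^ n : ℕ) : ℚ) := by
      exact_mod_cast Nat.div_add_mod (k ^ n) p
    rw [eq_div_iff hp0]
    push_cast at h2 ⊢
    linarith
  have hSn : S n = ∑ k ∈ Icc 1 (p - 1), (k : ℚ) ^ n := by
    rw [sum_shift', hSr]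
    have hpp : p = (p - 1) + 1 := by omega
    conv_lhs => rw [hpp]
    rw [Finset.sum_range_succ']
    push_cast
    simp [zero_pow (by omega : n ≠ 0)]
  have hLHS : (∑ k ∈ Icc 1 (p - 1), (⌊((k : ℚ) ^ n) / p⌋ : ℚ))
      = (S n - (p : ℚ) * ((p : ℚ) - 1) / 2) / p := by
    rw [hSn]
    rw [Finset.sum_congr rfl fun k _ => hfloor k]
    rw [← Finset.sum_div, Finset.sum_sub_distrib, hmodsum]
  -- Step B1 : inner sum
  have hinner : ∀ r ∈ Icc 1 (2 * q),
      (∑ l ∈ Finset.range (r + 1), ((r + 1).choose l : ℚ) * bernoulli l * (p : ℚ) ^ (2 * q + 1 - l))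
        = ((r : ℚ) + 1) * (p : ℚ) ^ (2 * q - r) * S r := by
    intro r hr
    simp only [Finset.mem_Icc] at hr
    rw [hSr]
    rw [sum_range_pow p r, Finset.mul_sum]
    apply Finset.sum_congr rfl
    intro i hi
    simp only [Finset.mem_range] at hi
    have hir : i ≤ r := by omega
    have hexp : 2 * q + 1 - i = (2 * q - r) + (r + 1 - i) := by omega
    have hr1 : ((r : ℚ) + 1) ≠ 0 := by positivity
    rw [hexp, pow_add]
    field_simp
  -- Step B3 : expansion identity
  have hexp : ∑ r ∈ range (n + 1), (n.choose r : ℚ) * S r * (-(p : ℚ)) ^ (n - r)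
      = -(S n + (p : ℚ) ^ n) := by
    calc ∑ r ∈ range (n + 1), (n.choose r : ℚ) * S r * (-(p : ℚ)) ^ (n - r)
        = ∑ r ∈ range (n + 1), ∑ k ∈ range p, (k : ℚ) ^ r * (-(p : ℚ)) ^ (n - r) * n.choose r := by
          apply Finset.sum_congr rfl
          intro r _
          rw [hSr]
          simp only [Finset.mul_sum, Finset.sum_mul]
          exact Finset.sum_congr rfl fun k _ => by ring
      _ = ∑ k ∈ range p, ∑ r ∈ range (n + 1), (k : ℚ) ^ r * (-(p : ℚ)) ^ (n - r) * n.choose r :=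
          Finset.sum_comm
      _ = ∑ k ∈ range p, ((k : ℚ) - p) ^ n := by
          apply Finset.sum_congr rfl
          intro k _
          rw [sub_eq_add_neg, add_pow]
      _ = -∑ k ∈ range p, (((p - k : ℕ) : ℚ)) ^ n := by
          rw [← Finset.sum_neg_distrib]
          apply Finset.sum_congr rfl
          intro k hk
          simp only [Finset.mem_range] at hk
          rw [Nat.cast_sub hk.le]
          rw [show (k : ℚ) - p = -((p : ℚ) - k) by ring, hodd.neg_pow]
      _ = -(S n + (p : ℚ) ^ n) := by
          congr 1
          have h1 : ∑ k ∈ range p, (((p - k : ℕ) : ℚ)) ^ n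
              = ∑ k ∈ range p, (((k + 1 : ℕ) : ℚ)) ^ n := by
            rw [← Finset.sum_range_reflect (fun j => (((j + 1 : ℕ) : ℚ)) ^ n) p]
            apply Finset.sum_congr rfl
            intro k hk
            simp only [Finset.mem_range] at hk
            congr 2
            omega
          rw [h1]
          have h2 := Finset.sum_range_succ' (fun j => ((j : ℕ) : ℚ) ^ n) p
          have h3 := Finset.sum_range_succ (fun j => ((j : ℕ) : ℚ) ^ n) p
          rw [h3] at h2
          rw [hSr]
          push_cast at h2 ⊢
          rw [h2]
          simp [zero_pow (by omega : n ≠ 0)]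
  -- Step B4 : peel
  have hpeel : ∑ r ∈ range (n + 1), (n.choose r : ℚ) * S r * (-(p : ℚ)) ^ (n - r)
      = (n.choose 0 : ℚ) * S 0 * (-(p : ℚ)) ^ n
        + (∑ r ∈ Icc 1 (2 * q), (n.choose r : ℚ) * S r * (-(p : ℚ)) ^ (n - r))
        + S n := by
    rw [Finset.sum_range_succ]
    have h4 : (n.choose n : ℚ) * S n * (-(p : ℚ)) ^ (n - n) = S n := by
      simp
    rw [h4]
    congr 1
    rw [show n = 2 * q + 1 from rfl, Finset.sum_range_succ' (fun r => ((2 * q + 1).choose r : ℚ) * S r * (-(p : ℚ)) ^ (2 * q + 1 - r)) (2 * q)]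
    rw [sum_shift']
    simp only [Nat.sub_zero]
    ring
  have hS0 : S 0 = p := by simp [hS]
  have hnegpow : (-(p : ℚ)) ^ n = -((p : ℚ) ^ n) := hodd.neg_pow _
  -- Step B5 : relate terms
  have hterm : ∀ r ∈ Icc 1 (2 * q),
      (n.choose r : ℚ) * S r * (-(p : ℚ)) ^ (n - r)
        = -(p : ℚ) * ((-1 : ℚ) ^ r * (n.choose r : ℚ) * (p : ℚ) ^ (2 * q - r) * S r) := by
    intro r hr
    simp only [Finset.mem_Icc] at hr
    have h1 : n - r = (2 * q - r) + 1 := by omega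
    rw [h1, pow_succ, neg_pow]
    have h2 : (-1 : ℚ) ^ (2 * q - r) = (-1 : ℚ) ^ r := by
      rw [neg_one_pow_eq_pow_mod_two, neg_one_pow_eq_pow_mod_two (n := r)]
      congr 1
      omega
    rw [h2]
    ring
  set G : ℕ → ℚ := fun r => (-1 : ℚ) ^ r * (n.choose r : ℚ) * (p : ℚ) ^ (2 * q - r) * S r with hG
  have hGsum : ∑ r ∈ Icc 1 (2 * q), G r = (2 * S n + (p : ℚ) ^ n - (p : ℚ) ^ (n + 1)) / p := by
    have h5 : ∑ r ∈ Icc 1 (2 * q), (n.choose r : ℚ) * S r * (-(p : ℚ)) ^ (n - r)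
        = -(p : ℚ) * ∑ r ∈ Icc 1 (2 * q), G r := by
      rw [Finset.mul_sum]
      exact Finset.sum_congr rfl hterm
    rw [hpeel, hS0, hnegpow, h5] at hexp
    simp only [Nat.choose_zero_right, Nat.cast_one, one_mul] at hexp
    rw [eq_div_iff hp0]
    linarith [hexp, pow_succ (p : ℚ) n]
  -- Final combination
  rw [hLHS]
  have hRsum : ∑ r ∈ Finset.Icc 1 (2 * q), ((-1 : ℚ) ^ r / (r + 1)) *
        ((2 * q + 1).choose r) *
        (∑ l ∈ Finset.range (r + 1),
          ((r + 1).choose l : ℚ) * bernoulli l * (p : ℚ) ^ (2 * q + 1 - l))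
      = ∑ r ∈ Icc 1 (2 * q), G r := by
    apply Finset.sum_congr rfl
    intro r hr
    rw [hinner r hr, hSr, ← hSr r]
    simp only [Finset.mem_Icc] at hr
    have hr1 : ((r : ℚ) + 1) ≠ 0 := by positivity
    field_simp
    ring
  rw [hRsum, hGsum]
  have hpn : (p : ℚ) ^ n = (p : ℚ) ^ (2 * q) * p := by rw [hn_def, pow_succ]
  have hpn1 : (p : ℚ) ^ (n + 1) = (p : ℚ) ^ (2 * q) * p * p := by
    rw [pow_succ, hpn]
  field_simp
  ring
end

section
/- For a prime p and integer q ≥ 1, Σ_{k=1}^{p-1} ⌊k^(2q+1)/p⌋ = (B_{2q+2}(p+1) + B_{2q+2}(p) - 2·B_{2q+2}) / (2p(2q+2)) - (p^(2q) + p - 1)/2, where B_n(x) denotes the n-th Bernoulli polynomial and B_n = B_n(0) the n-th Bernoulli number. -/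
open Finset in
lemma res_pair {p : ℕ} (hp : p.Prime) {m : ℕ} (hm : Odd m) {k : ℕ}
    (hk1 : 1 ≤ k) (hk2 : k ≤ p - 1) :
    k ^ m % p + (p - k) ^ m % p = p := by
  have hp0 : 0 < p := hp.pos
  have hkp : k < p := by omega
  have hdvd : p ∣ k ^ m + (p - k) ^ m := by
    have := Odd.nat_add_dvd_pow_add_pow k (p - k) hm
    rwa [show k + (p - k) = p by omega] at this
  have ha : k ^ m % p ≠ 0 := fun h => by
    have := Nat.le_of_dvd (by omega) (hp.dvd_of_dvd_pow (Nat.dvd_of_mod_eq_zero h))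
    omega
  have hb : (p - k) ^ m % p ≠ 0 := fun h => by
    have := Nat.le_of_dvd (by omega) (hp.dvd_of_dvd_pow (Nat.dvd_of_mod_eq_zero h))
    omega
  have h0 : (k ^ m % p + (p - k) ^ m % p) % p = 0 := by
    rw [← Nat.add_mod]
    exact Nat.mod_eq_zero_of_dvd hdvd
  have hdvd2 : p ∣ k ^ m % p + (p - k) ^ m % p := Nat.dvd_of_mod_eq_zero h0
  obtain ⟨c, hc⟩ := hdvd2
  have h1 : k ^ m % p < p := Nat.mod_lt _ hp0
  have h2 : (p - k) ^ m % p < p := Nat.mod_lt _ hp0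
  have hc2 : c < 2 := by
    by_contra h
    push_neg at h
    have : p * 2 ≤ p * c := Nat.mul_le_mul_left p h
    omega
  have hc1 : c ≠ 0 := by rintro rfl; omega
  have : c = 1 := by omega
  subst this
  omega

lemma sum_res {p : ℕ} (hp : p.Prime) {m : ℕ} (hm : Odd m) :
    (∑ k ∈ Finset.Icc 1 (p - 1), k ^ m % p) * 2 = p * (p - 1) := by
  have hrefl : ∑ k ∈ Finset.Icc 1 (p - 1), k ^ m % p
      = ∑ k ∈ Finset.Icc 1 (p - 1), (p - k) ^ m % p := by
    apply Finset.sum_nbij' (fun k => p - k) (fun k => p - k)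
    · intro a ha; simp only [Finset.mem_Icc] at *; omega
    · intro a ha; simp only [Finset.mem_Icc] at *; omega
    · intro a ha; simp only [Finset.mem_Icc] at *; omega
    · intro a ha; simp only [Finset.mem_Icc] at *; omega
    · intro a ha
      simp only [Finset.mem_Icc] at ha
      rw [Nat.sub_sub_self (by omega)]
  calc (∑ k ∈ Finset.Icc 1 (p - 1), k ^ m % p) * 2
      = (∑ k ∈ Finset.Icc 1 (p - 1), k ^ m % p)
        + ∑ k ∈ Finset.Icc 1 (p - 1), (p - k) ^ m % p := by rw [← hrefl]; ring
    _ = ∑ k ∈ Finset.Icc 1 (p - 1), (k ^ m % p + (p - k) ^ m % p) := by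
        rw [Finset.sum_add_distrib]
    _ = ∑ k ∈ Finset.Icc 1 (p - 1), p := by
        apply Finset.sum_congr rfl
        intro k hk
        simp only [Finset.mem_Icc] at hk
        exact res_pair hp hm hk.1 hk.2
    _ = p * (p - 1) := by
        rw [Finset.sum_const, Nat.card_Icc]
        simp [Nat.smul_one_eq_cast]
        ring
theorem stmt_5 (p q : ℕ) (hp : p.Prime) (hq : 1 ≤ q) :
    (∑ k ∈ Finset.Icc 1 (p - 1), (⌊((k : ℚ) ^ (2 * q + 1)) / p⌋ : ℚ)) =
      ((Polynomial.bernoulli (2 * q + 2)).eval ((p : ℚ) + 1) +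
        (Polynomial.bernoulli (2 * q + 2)).eval (p : ℚ) -
        2 * bernoulli (2 * q + 2)) / (2 * p * (2 * q + 2)) -
      ((p : ℚ) ^ (2 * q) + p - 1) / 2 := by
  have hp2 : 2 ≤ p := hp.two_le
  have hpQ : (p : ℚ) ≠ 0 := Nat.cast_ne_zero.mpr (by omega)
  have hmodd : Odd (2 * q + 1) := ⟨q, by omega⟩
  -- rewrite floors as natural division
  have hfl : ∀ k : ℕ, (⌊((k : ℚ) ^ (2 * q + 1)) / p⌋ : ℚ)
      = ((k ^ (2 * q + 1) / p : ℕ) : ℚ) := by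
    intro k
    rw [← natCast_floor_eq_intCast_floor (by positivity),
      show ((k : ℚ) ^ (2 * q + 1)) = ((k ^ (2 * q + 1) : ℕ) : ℚ) by push_cast; ring,
      Nat.floor_div_eq_div]
  have hdiv : ∀ k : ℕ, ((k ^ (2 * q + 1) / p : ℕ) : ℚ)
      = (k : ℚ) ^ (2 * q + 1) / p - ((k ^ (2 * q + 1) % p : ℕ) : ℚ) / p := by
    intro k
    have h := Nat.div_add_mod (k ^ (2 * q + 1)) p
    have h2 := congrArg (Nat.cast (R := ℚ)) h
    push_cast at h2
    field_simp
    linarith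
  -- residue sum
  have hres : (∑ k ∈ Finset.Icc 1 (p - 1), ((k ^ (2 * q + 1) % p : ℕ) : ℚ))
      = (p : ℚ) * ((p : ℚ) - 1) / 2 := by
    have h := sum_res hp hmodd
    have h2 := congrArg (Nat.cast (R := ℚ)) h
    push_cast [Nat.cast_sub (by omega : 1 ≤ p)] at h2
    linarith
  -- power sum over Icc equals over range
  have hrange : ∑ k ∈ Finset.Icc 1 (p - 1), ((k : ℚ)) ^ (2 * q + 1)
      = ∑ k ∈ Finset.range p, (k : ℚ) ^ (2 * q + 1) := by
    rw [Finset.range_eq_Ico, Finset.sum_eq_sum_Ico_succ_bot (by omega : 0 < p)]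
    rw [show Finset.Icc 1 (p - 1) = Finset.Ico 1 p by
      rw [← Finset.Ico_add_one_right_eq_Icc]; congr 1; omega]
    norm_num
  set S : ℚ := ∑ k ∈ Finset.range p, (k : ℚ) ^ (2 * q + 1) with hS
  -- Bernoulli evaluations
  have hb1 : (Polynomial.bernoulli (2 * q + 2)).eval ((p : ℚ) + 1)
      = bernoulli (2 * q + 2) + (2 * (q : ℚ) + 2) * (S + (p : ℚ) ^ (2 * q + 1)) := by
    have h := Polynomial.bernoulli_succ_eval (p + 1) (2 * q + 1)
    rw [Finset.sum_range_succ] at h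
    rw [show (2 * q + 2) = (2 * q + 1).succ from rfl]
    push_cast at h ⊢
    rw [h]
    ring
  have hb2 : (Polynomial.bernoulli (2 * q + 2)).eval ((p : ℚ))
      = bernoulli (2 * q + 2) + (2 * (q : ℚ) + 2) * S := by
    have h := Polynomial.bernoulli_succ_eval p (2 * q + 1)
    rw [show (2 * q + 2) = (2 * q + 1).succ from rfl]
    rw [h]
    push_cast
    ring
  calc (∑ k ∈ Finset.Icc 1 (p - 1), (⌊((k : ℚ) ^ (2 * q + 1)) / p⌋ : ℚ))
      = ∑ k ∈ Finset.Icc 1 (p - 1),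
          ((k : ℚ) ^ (2 * q + 1) / p - ((k ^ (2 * q + 1) % p : ℕ) : ℚ) / p) := by
        exact Finset.sum_congr rfl fun k _ => by rw [hfl k, hdiv k]
    _ = (∑ k ∈ Finset.Icc 1 (p - 1), (k : ℚ) ^ (2 * q + 1)) / p
        - (∑ k ∈ Finset.Icc 1 (p - 1), ((k ^ (2 * q + 1) % p : ℕ) : ℚ)) / p := by
        rw [Finset.sum_sub_distrib, ← Finset.sum_div, ← Finset.sum_div]
    _ = S / p - ((p : ℚ) * ((p : ℚ) - 1) / 2) / p := by rw [hrange, hres]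
    _ = _ := by
        rw [hb1, hb2]
        have hq2 : (2 * (q : ℚ) + 2) ≠ 0 := by positivity
        field_simp
        ring
end

section
/- For every prime p, Σ_{k=1}^{p-1} ⌊k^7/p⌋ = (1/24)·(p-2)(p-1)(p+1)(3p^4 - 6p^3 + 5p^2 - 2p + 6). -/
lemma sum7 (n : ℕ) : ∑ k ∈ Finset.Icc 1 n, (k : ℚ) ^ 7 =
    (n : ℚ) ^ 2 * ((n : ℚ) + 1) ^ 2 *
      (3 * (n : ℚ) ^ 4 + 6 * (n : ℚ) ^ 3 - (n : ℚ) ^ 2 - 4 * n + 2) / 24 := by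
  induction n with
  | zero => simp
  | succ m ih =>
    rw [Finset.sum_Icc_succ_top (by omega), ih]
    push_cast
    ring

lemma pair_res (p k : ℕ) (hp : p.Prime) (hk1 : 1 ≤ k) (hk2 : k ≤ p - 1) :
    k ^ 7 % p + (p - k) ^ 7 % p = p := by
  have hp1 := hp.one_lt
  have hkp : k < p := by omega
  have ha : k ^ 7 % p ≠ 0 := by
    intro h
    have h1 : p ∣ k ^ 7 := Nat.dvd_of_mod_eq_zero h
    have h2 : p ∣ k := hp.dvd_of_dvd_pow h1
    have := Nat.le_of_dvd (by omega) h2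
    omega
  have hb : (p - k) ^ 7 % p ≠ 0 := by
    intro h
    have h1 : p ∣ (p - k) ^ 7 := Nat.dvd_of_mod_eq_zero h
    have h2 : p ∣ (p - k) := hp.dvd_of_dvd_pow h1
    have := Nat.le_of_dvd (by omega) h2
    omega
  have h2 : p ∣ k ^ 7 + (p - k) ^ 7 := by
    have h := Odd.nat_add_dvd_pow_add_pow k (p - k) (n := 7) (by decide)
    rwa [Nat.add_sub_cancel' hkp.le] at h
  have hdvd : p ∣ k ^ 7 % p + (p - k) ^ 7 % p := by
    apply Nat.dvd_of_mod_eq_zero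
    rw [Nat.add_mod_mod, Nat.mod_add_mod]
    exact Nat.mod_eq_zero_of_dvd h2
  have hlt1 : k ^ 7 % p < p := Nat.mod_lt _ (by omega)
  have hlt2 : (p - k) ^ 7 % p < p := Nat.mod_lt _ (by omega)
  obtain ⟨c, hc⟩ := hdvd
  have hc0 : c ≠ 0 := by rintro rfl; omega
  have hc1 : c = 1 := by
    by_contra h
    have h2c : 2 ≤ c := by omega
    have : p * 2 ≤ p * c := Nat.mul_le_mul_left p h2c
    omega
  rw [hc1, mul_one] at hc
  omega

theorem stmt_10 (p : ℕ) (hp : p.Prime) :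
    (∑ k ∈ Finset.Icc 1 (p - 1), (⌊((k : ℚ) ^ 7) / p⌋ : ℚ)) =
      (1 / 24) * ((p : ℚ) - 2) * ((p : ℚ) - 1) * ((p : ℚ) + 1) *
        (3 * (p : ℚ) ^ 4 - 6 * (p : ℚ) ^ 3 + 5 * (p : ℚ) ^ 2 - 2 * p + 6) := by
  have hp1 := hp.one_lt
  have hp0 : (p : ℚ) ≠ 0 := by exact_mod_cast hp.pos.ne'
  -- rewrite floors as nat division
  have key : ∀ k ∈ Finset.Icc 1 (p - 1), (⌊((k : ℚ) ^ 7) / p⌋ : ℚ) = ((k ^ 7 / p : ℕ) : ℚ) := by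
    intro k _
    have h : ((k : ℚ) ^ 7) = ((k ^ 7 : ℕ) : ℚ) := by push_cast; ring
    rw [h, Rat.floor_natCast_div_natCast]
    norm_cast
  rw [Finset.sum_congr rfl key]
  -- sum of residues
  have hres : 2 * ∑ k ∈ Finset.Icc 1 (p - 1), k ^ 7 % p = (p - 1) * p := by
    have hrefl : ∑ k ∈ Finset.Icc 1 (p - 1), (p - k) ^ 7 % p
        = ∑ k ∈ Finset.Icc 1 (p - 1), k ^ 7 % p := by
      apply Finset.sum_nbij' (fun k => p - k) (fun k => p - k)
      · intro a ha; simp only [Finset.mem_Icc] at ha ⊢; omega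
      · intro a ha; simp only [Finset.mem_Icc] at ha ⊢; omega
      · intro a ha; simp only [Finset.mem_Icc] at ha; omega
      · intro a ha; simp only [Finset.mem_Icc] at ha; omega
      · intro a _; rfl
    calc 2 * ∑ k ∈ Finset.Icc 1 (p - 1), k ^ 7 % p
        = ∑ k ∈ Finset.Icc 1 (p - 1), (k ^ 7 % p + (p - k) ^ 7 % p) := by
          rw [Finset.sum_add_distrib, hrefl]; ring
      _ = ∑ _k ∈ Finset.Icc 1 (p - 1), p := by
          refine Finset.sum_congr rfl fun k hk => ?_
          simp only [Finset.mem_Icc] at hk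
          exact pair_res p k hp hk.1 hk.2
      _ = (p - 1) * p := by
          rw [Finset.sum_const, Nat.card_Icc]
          simp [smul_eq_mul]
  have hresQ : ∑ k ∈ Finset.Icc 1 (p - 1), ((k ^ 7 % p : ℕ) : ℚ) = ((p : ℚ) - 1) * p / 2 := by
    have h2 : ((2 * ∑ k ∈ Finset.Icc 1 (p - 1), k ^ 7 % p : ℕ) : ℚ)
        = (((p - 1) * p : ℕ) : ℚ) := congrArg (fun n : ℕ => (n : ℚ)) hres
    push_cast [Nat.cast_sub hp1.le] at h2
    linarith
  -- div/mod decomposition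
  have hsum : (p : ℚ) * ∑ k ∈ Finset.Icc 1 (p - 1), ((k ^ 7 / p : ℕ) : ℚ)
      + ∑ k ∈ Finset.Icc 1 (p - 1), ((k ^ 7 % p : ℕ) : ℚ)
      = ∑ k ∈ Finset.Icc 1 (p - 1), (k : ℚ) ^ 7 := by
    rw [Finset.mul_sum, ← Finset.sum_add_distrib]
    refine Finset.sum_congr rfl fun k _ => ?_
    calc (p : ℚ) * ((k ^ 7 / p : ℕ) : ℚ) + ((k ^ 7 % p : ℕ) : ℚ)
        = ((p * (k ^ 7 / p) + k ^ 7 % p : ℕ) : ℚ) := by push_cast; ring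
      _ = ((k ^ 7 : ℕ) : ℚ) := by rw [Nat.div_add_mod]
      _ = (k : ℚ) ^ 7 := by push_cast; ring
  have hcast : ((p - 1 : ℕ) : ℚ) = (p : ℚ) - 1 := by
    push_cast [Nat.cast_sub hp1.le]; ring
  rw [sum7 (p - 1), hcast, hresQ] at hsum
  apply mul_left_cancel₀ hp0
  linarith [hsum]
end

section
/- For every prime p and integer q ≥ 1, Σ_{k=1}^{p-1} ⌊k^(2q+1)/p⌋ = (B_{2q+2}(p+1) - B_{2q+2}(1))/(2p(2q+2)) + (B_{2q+2}(p) - B_{2q+2}(0))/(2p(2q+2)) - (p^{2q} + p - 1)/2. -/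
open Finset

private lemma pair_mod (p : ℕ) (hp : p.Prime) (m : ℕ) (hm : Odd m) (k : ℕ)
    (hk1 : 1 ≤ k) (hk2 : k ≤ p - 1) :
    k ^ m % p + (p - k) ^ m % p = p := by
  have hp2 := hp.two_le
  have hkp : k ≤ p := by omega
  have hk0 : ¬ p ∣ k := by
    intro h
    have := Nat.le_of_dvd (by omega) h
    omega
  have hk0' : ¬ p ∣ (p - k) := by
    intro h
    have := Nat.le_of_dvd (by omega) h
    omega
  have h1 : ¬ p ∣ k ^ m := fun h => hk0 (hp.dvd_of_dvd_pow h)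
  have h2 : ¬ p ∣ (p - k) ^ m := fun h => hk0' (hp.dvd_of_dvd_pow h)
  have hd : p ∣ k ^ m + (p - k) ^ m := by
    have hmod : ((p : ℤ) - k) ≡ -k [ZMOD p] := Int.modEq_iff_dvd.mpr ⟨-1, by ring⟩
    have hpow := hmod.pow m
    have hz : ((p : ℤ)) ∣ (k : ℤ) ^ m + ((p : ℤ) - k) ^ m := by
      have h0 : (k : ℤ) ^ m + ((p : ℤ) - k) ^ m ≡ (k : ℤ) ^ m + (-k : ℤ) ^ m [ZMOD p] :=
        (Int.ModEq.refl _).add hpow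
      rw [hm.neg_pow] at h0
      simpa using (Int.modEq_zero_iff_dvd.mp (by simpa using h0))
    refine Int.natCast_dvd_natCast.mp ?_
    push_cast [Nat.cast_sub hkp]
    exact hz
  have ha : k ^ m % p ≠ 0 := fun h => h1 (Nat.dvd_of_mod_eq_zero h)
  have hb : (p - k) ^ m % p ≠ 0 := fun h => h2 (Nat.dvd_of_mod_eq_zero h)
  have ha' : k ^ m % p < p := Nat.mod_lt _ (by omega)
  have hb' : (p - k) ^ m % p < p := Nat.mod_lt _ (by omega)
  have hdd : p ∣ (k ^ m % p + (p - k) ^ m % p) := by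
    refine Nat.dvd_of_mod_eq_zero ?_
    rw [← Nat.add_mod]
    exact Nat.mod_eq_zero_of_dvd hd
  exact Nat.eq_of_dvd_of_lt_two_mul (by omega) hdd (by omega)

theorem stmt_17 (p q : ℕ) (hp : p.Prime) (hq : 1 ≤ q) :
    (∑ k ∈ Finset.Icc 1 (p - 1), (⌊((k : ℚ) ^ (2 * q + 1)) / p⌋ : ℚ)) =
      ((Polynomial.bernoulli (2 * q + 2)).eval ((p : ℚ) + 1) -
        (Polynomial.bernoulli (2 * q + 2)).eval (1 : ℚ)) / (2 * p * (2 * q + 2)) +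
      ((Polynomial.bernoulli (2 * q + 2)).eval (p : ℚ) -
        (Polynomial.bernoulli (2 * q + 2)).eval (0 : ℚ)) / (2 * p * (2 * q + 2)) -
      ((p : ℚ) ^ (2 * q) + p - 1) / 2 := by
  have hp2 := hp.two_le
  set m := 2 * q + 1 with hm
  have hmodd : Odd m := ⟨q, by omega⟩
  have hp0 : (p : ℚ) ≠ 0 := by exact_mod_cast hp.ne_zero
  -- LHS terms as natural division
  have hterm : ∀ k ∈ Finset.Icc 1 (p - 1),
      (⌊((k : ℚ) ^ m) / p⌋ : ℚ) = ((k ^ m : ℚ) - ((k ^ m % p : ℕ) : ℚ)) / p := by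
    intro k hk
    have h1 : ((k : ℚ) ^ m) / p = ((k ^ m : ℕ) : ℚ) / ((p : ℕ) : ℚ) := by push_cast; ring
    rw [h1, Rat.floor_natCast_div_natCast,
      show ((k ^ m : ℕ) : ℤ) / ((p : ℕ) : ℤ) = ((k ^ m / p : ℕ) : ℤ) from (Int.natCast_div _ _).symm,
      Int.cast_natCast, eq_div_iff hp0]
    have h2 := Nat.div_add_mod (k ^ m) p
    have h3 : ((p * (k ^ m / p) + k ^ m % p : ℕ) : ℚ) = ((k ^ m : ℕ) : ℚ) := by rw [h2]
    push_cast at h3 ⊢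
    linarith
  rw [Finset.sum_congr rfl hterm]
  -- the mod sum
  have hmodsum : (∑ k ∈ Finset.Icc 1 (p - 1), ((k ^ m % p : ℕ) : ℚ)) = p * (p - 1) / 2 := by
    have key : 2 * (∑ k ∈ Finset.Icc 1 (p - 1), (k ^ m % p)) = p * (p - 1) := by
      have hrefl : (∑ k ∈ Finset.Icc 1 (p - 1), (k ^ m % p))
          = ∑ k ∈ Finset.Icc 1 (p - 1), ((p - k) ^ m % p) := by
        refine Finset.sum_nbij' (fun k => p - k) (fun k => p - k) ?_ ?_ ?_ ?_ ?_
        · intro a ha; simp only [Finset.mem_Icc] at ha ⊢; omega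
        · intro a ha; simp only [Finset.mem_Icc] at ha ⊢; omega
        · intro a ha; simp only [Finset.mem_Icc] at ha; show p - (p - a) = a; omega
        · intro a ha; simp only [Finset.mem_Icc] at ha; show p - (p - a) = a; omega
        · intro a ha; simp only [Finset.mem_Icc] at ha
          show a ^ m % p = (p - (p - a)) ^ m % p
          congr 2
          omega
      calc 2 * (∑ k ∈ Finset.Icc 1 (p - 1), (k ^ m % p))
          = (∑ k ∈ Finset.Icc 1 (p - 1), (k ^ m % p))
            + ∑ k ∈ Finset.Icc 1 (p - 1), ((p - k) ^ m % p) := by rw [← hrefl]; ring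
        _ = ∑ k ∈ Finset.Icc 1 (p - 1), (k ^ m % p + (p - k) ^ m % p) := by
            rw [Finset.sum_add_distrib]
        _ = ∑ k ∈ Finset.Icc 1 (p - 1), p := by
            refine Finset.sum_congr rfl fun k hk => ?_
            simp only [Finset.mem_Icc] at hk
            exact pair_mod p hp m hmodd k hk.1 hk.2
        _ = (p - 1) * p := by rw [Finset.sum_const, Nat.card_Icc]; simp [Nat.smul_one_eq_cast]
        _ = p * (p - 1) := by ring
    have := congrArg (fun n : ℕ => (n : ℚ)) key
    push_cast [Nat.cast_sub (by omega : 1 ≤ p)] at this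
    linarith
  -- the power sum
  have hpowsum : (∑ k ∈ Finset.Icc 1 (p - 1), ((k : ℚ) ^ m))
      = ∑ k ∈ Finset.range p, ((k : ℚ) ^ m) := by
    have hset : Finset.Icc 1 (p - 1) = Finset.range p \ {0} := by
      ext a; simp [Finset.mem_range, Finset.mem_Icc]; omega
    rw [hset, Finset.sum_eq_sum_sdiff_singleton_add (Finset.mem_range.mpr (by omega) : 0 ∈ Finset.range p)]
    simp [hm]
  -- bernoulli evaluations
  have hb1 : (Polynomial.bernoulli (2 * q + 2)).eval ((p : ℚ) + 1)
      = _root_.bernoulli (2 * q + 2)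
        + (m + 1 : ℚ) * ((∑ k ∈ Finset.range p, ((k : ℚ) ^ m)) + (p : ℚ) ^ m) := by
    have := Polynomial.bernoulli_succ_eval (p + 1) m
    rw [Nat.succ_eq_add_one] at this
    have h2 : (((p + 1 : ℕ)) : ℚ) = (p : ℚ) + 1 := by push_cast; ring
    rw [h2] at this
    rw [show 2 * q + 2 = m + 1 by omega, this, Finset.sum_range_succ]
  have hb2 : (Polynomial.bernoulli (2 * q + 2)).eval ((p : ℚ))
      = _root_.bernoulli (2 * q + 2)
        + (m + 1 : ℚ) * (∑ k ∈ Finset.range p, ((k : ℚ) ^ m)) := by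
    have := Polynomial.bernoulli_succ_eval p m
    rw [Nat.succ_eq_add_one] at this
    rw [show 2 * q + 2 = m + 1 by omega, this]
  have hb3 : (Polynomial.bernoulli (2 * q + 2)).eval (1 : ℚ) = _root_.bernoulli (2 * q + 2) := by
    rw [Polynomial.bernoulli_eval_one, bernoulli_eq_bernoulli'_of_ne_one (by omega)]
  have hb4 : (Polynomial.bernoulli (2 * q + 2)).eval (0 : ℚ) = _root_.bernoulli (2 * q + 2) :=
    Polynomial.bernoulli_eval_zero _
  rw [hb1, hb2, hb3, hb4]
  rw [← Finset.sum_div, Finset.sum_sub_distrib, hmodsum, hpowsum]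
  have hmp1 : (m : ℚ) + 1 = 2 * q + 2 := by push_cast [hm]; ring
  have hppow : (p : ℚ) ^ m = (p : ℚ) ^ (2 * q) * p := by rw [hm, pow_succ]
  rw [hmp1, hppow]
  have hc0 : (2 * (q : ℚ) + 2) ≠ 0 := by positivity
  field_simp
  ring
end
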